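/- Step 2 of the three-point splitting identity: with b = [x<z<y], c = [x<y, x<z], d = [x<y, z<y] as partial orders on {x,y,z}, a partial order s on {x,y,z} is compatible with b if and only if s is compatible with both c and d. -/

import Mathlib

/-- Two relations are compatible when the transitive closure of their union is
antisymmetric (i.e. the union is acyclic). -/
def Compatible {X : Type*} (r s : X → X → Prop) : Prop :=
  ∀ a b : X, Relation.TransGen (fun u v => r u v ∨ s u v) a b →
    Relation.TransGen (fun u v => r u v ∨ s u v) b a → a = b

open Classical in
/-- The compatibility pairing with values in a commutative semiring. -/
noncomputable def bracket {X : Type*} (S : Type*) [CommSemiring S]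
    (r s : X → X → Prop) : S :=
  if Compatible r s then 1 else 0

/-- `[x<y]`: the smallest partial order with `x < y`. -/
def relA {X : Type*} (x y : X) : X → X → Prop :=
  fun p q => p = q ∨ (p = x ∧ q = y)

/-- `[x<z<y]`: the smallest partial order with `x < z` and `z < y`. -/
def relB {X : Type*} (x y z : X) : X → X → Prop :=
  fun p q => p = q ∨ (p = x ∧ q = z) ∨ (p = z ∧ q = y) ∨ (p = x ∧ q = y)

/-- `[x<y, x<z]`: the smallest partial order with `x < y` and `x < z`. -/
def relC {X : Type*} (x y z : X) : X → X → Prop :=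
  fun p q => p = q ∨ (p = x ∧ q = y) ∨ (p = x ∧ q = z)

/-- `[x<y, z<y]`: the smallest partial order with `x < y` and `z < y`. -/
def relD {X : Type*} (x y z : X) : X → X → Prop :=
  fun p q => p = q ∨ (p = x ∧ q = y) ∨ (p = z ∧ q = y)

theorem stmt9 {X : Type*} (x y z : X)
    (hxy : x ≠ y) (hxz : x ≠ z) (hyz : y ≠ z)
    (hcover : ∀ w : X, w = x ∨ w = y ∨ w = z)
    (s : X → X → Prop) (hs : IsPartialOrder X s) :
    Compatible (relB x y z) s ↔ (Compatible (relC x y z) s ∧ Compatible (relD x y z) s) := by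
  constructor
  · intro hB
    constructor
    · intro a b h1 h2
      exact hB a b
        (Relation.TransGen.mono (fun u v h => by unfold relC relB at *; tauto) _ _ h1)
        (Relation.TransGen.mono (fun u v h => by unfold relC relB at *; tauto) _ _ h2)
    · intro a b h1 h2
      exact hB a b
        (Relation.TransGen.mono (fun u v h => by unfold relD relB at *; tauto) _ _ h1)
        (Relation.TransGen.mono (fun u v h => by unfold relD relB at *; tauto) _ _ h2)
  · rintro ⟨hC, hD⟩
    -- derive the three forbidden s-relations
    have hsyx : ¬ s y x := by
      intro h
      exact hxy (hC x y
        (Relation.TransGen.single (Or.inl (by unfold relC; tauto)))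
        (Relation.TransGen.single (Or.inr h)))
    have hszx : ¬ s z x := by
      intro h
      exact hxz (hC x z
        (Relation.TransGen.single (Or.inl (by unfold relC; tauto)))
        (Relation.TransGen.single (Or.inr h)))
    have hsyz : ¬ s y z := by
      intro h
      exact hyz.symm (hD z y
        (Relation.TransGen.single (Or.inl (by unfold relD; tauto)))
        (Relation.TransGen.single (Or.inr h)))
    -- s is contained in relB
    have hsub : ∀ u v, (relB x y z u v ∨ s u v) → relB x y z u v := by
      rintro u v (h | h)
      · exact h
      · rcases hcover u with hu | hu | hu <;> rcases hcover v with hv | hv | hv <;>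
          subst hu <;> subst hv <;> unfold relB <;> first
          | tauto
          | (exact absurd h hsyx)
          | (exact absurd h hsyz)
          | (exact absurd h hszx)
    have htrans : ∀ a b c : X, relB x y z a b → relB x y z b c → relB x y z a c := by
      unfold relB
      rintro a b c (rfl | ⟨rfl, rfl⟩ | ⟨rfl, rfl⟩ | ⟨rfl, rfl⟩)
        (h | ⟨rfl, rfl⟩ | ⟨h1, rfl⟩ | ⟨h1, rfl⟩) <;> tauto
    have hcl : ∀ a b : X, Relation.TransGen (fun u v => relB x y z u v ∨ s u v) a b →
        relB x y z a b := by
      intro a b h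
      induction h with
      | single h => exact hsub _ _ h
      | tail _ h ih => exact htrans _ _ _ ih (hsub _ _ h)
    intro a b h1 h2
    have r1 := hcl a b h1
    have r2 := hcl b a h2
    unfold relB at r1 r2
    rcases r1 with rfl | ⟨rfl, rfl⟩ | ⟨rfl, rfl⟩ | ⟨rfl, rfl⟩ <;>
      rcases r2 with h | ⟨h1, h2⟩ | ⟨h1, h2⟩ | ⟨h1, h2⟩ <;> first | rfl | tauto
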